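/- arXiv:2502.04454 — 5 statements merged into one kernel-verified Lean document; each statement's English description precedes it below -/
import Mathlib

section
/- For 0 ≤ ε₀ < 2 and τ > 0, the function r² ↦ 2·√(1 − ((2−ε₀)/2)^{2r²/τ² + r/τ + 2}) (viewed as a function of u = r² ≥ 0, with r = √u) is concave in u and tends to 0 pointwise as ε₀ → 0. -/
open Real Filter

lemma concave_comp_mono {s t : Set ℝ} {f g : ℝ → ℝ} (hg : ConcaveOn ℝ t g)
    (hg' : Monotone g) (hf : ConcaveOn ℝ s f) (hmaps : ∀ x ∈ s, f x ∈ t) :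
    ConcaveOn ℝ s (fun x => g (f x)) := by
  refine ⟨hf.1, fun x hx y hy a b ha hb hab => ?_⟩
  calc a • g (f x) + b • g (f y) ≤ g (a • f x + b • f y) :=
        hg.2 (hmaps x hx) (hmaps y hy) ha hb hab
    _ ≤ g (f (a • x + b • y)) := hg' (hf.2 hx hy ha hb hab)

lemma convexOn_rpow_base {c : ℝ} (hc : 0 < c) :
    ConvexOn ℝ Set.univ (fun t : ℝ => c ^ (t : ℝ)) := by
  refine ⟨convex_univ, fun x _ y _ a b ha hb hab => ?_⟩
  simp only [smul_eq_mul]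
  rw [Real.rpow_def_of_pos hc, Real.rpow_def_of_pos hc, Real.rpow_def_of_pos hc]
  have := convexOn_exp.2 (Set.mem_univ (Real.log c * x)) (Set.mem_univ (Real.log c * y))
    ha hb hab
  simp only [smul_eq_mul] at this
  calc Real.exp (Real.log c * (a * x + b * y))
      = Real.exp (a * (Real.log c * x) + b * (Real.log c * y)) := by ring_nf
    _ ≤ a * Real.exp (Real.log c * x) + b * Real.exp (Real.log c * y) := this

/-- The bounding function `u ↦ 2√(1 − ((2−ε₀)/2)^{2u/τ² + √u/τ + 2})` is concave
in `u = r²` on `[0,∞)`, and for each fixed `u` it tends to `0` as `ε₀ → 0⁺`. -/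
theorem stmt4 (τ : ℝ) (hτ : 0 < τ) :
    (∀ ε₀ : ℝ, 0 ≤ ε₀ → ε₀ < 2 →
      ConcaveOn ℝ (Set.Ici 0)
        (fun u : ℝ =>
          2 * Real.sqrt (1 - ((2 - ε₀) / 2) ^
            (2 * u / τ ^ 2 + Real.sqrt u / τ + 2 : ℝ)))) ∧
    (∀ u : ℝ, 0 ≤ u →
      Tendsto
        (fun ε₀ : ℝ =>
          2 * Real.sqrt (1 - ((2 - ε₀) / 2) ^
            (2 * u / τ ^ 2 + Real.sqrt u / τ + 2 : ℝ)))
        (nhdsWithin 0 (Set.Ioi 0)) (nhds 0)) := by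
  constructor
  · intro ε₀ hε₀ hε₀2
    set c : ℝ := (2 - ε₀) / 2 with hc_def
    have hc : 0 < c := by rw [hc_def]; linarith
    have hc1 : c ≤ 1 := by rw [hc_def]; linarith
    -- g concave on Ici 0
    have hsqrt : ConcaveOn ℝ (Set.Ici 0) Real.sqrt := by
      have := Real.strictConcaveOn_sqrt.concaveOn
      exact this
    have hg : ConcaveOn ℝ (Set.Ici 0)
        (fun u : ℝ => 2 * u / τ ^ 2 + Real.sqrt u / τ + 2) := by
      have h1 : ConcaveOn ℝ (Set.Ici 0) (fun u : ℝ => 2 * u / τ ^ 2) := by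
        have : ConcaveOn ℝ (Set.Ici (0:ℝ)) (fun u : ℝ => u) := concaveOn_id (convex_Ici 0)
        have := this.smul (c := 2 / τ ^ 2) (by positivity)
        convert this using 2 with u
        case e'_12 => simp [smul_eq_mul]; ring
        all_goals rfl
      have h2 : ConcaveOn ℝ (Set.Ici 0) (fun u : ℝ => Real.sqrt u / τ) := by
        have := hsqrt.smul (c := 1 / τ) (by positivity)
        convert this using 2 with u
        case e'_12 => simp [smul_eq_mul]; ring
        all_goals rfl
      have h3 : ConcaveOn ℝ (Set.Ici (0:ℝ)) (fun _ : ℝ => (2:ℝ)) :=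
        concaveOn_const 2 (convex_Ici 0)
      exact (h1.add h2).add h3
    have hgnn : ∀ u : ℝ, u ∈ Set.Ici (0:ℝ) →
        0 ≤ 2 * u / τ ^ 2 + Real.sqrt u / τ + 2 := by
      intro u hu
      have : (0:ℝ) ≤ u := hu
      have h1 : 0 ≤ 2 * u / τ ^ 2 := by positivity
      have h2 : 0 ≤ Real.sqrt u / τ := by positivity
      linarith
    -- φ(t) = 1 - c^t concave & monotone on univ
    have hφ : ConcaveOn ℝ Set.univ (fun t : ℝ => 1 - c ^ (t : ℝ)) := by
      have h1 : ConcaveOn ℝ (Set.univ : Set ℝ) (fun _ : ℝ => (1:ℝ)) :=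
        concaveOn_const 1 convex_univ
      have h2 := h1.add (convexOn_rpow_base hc).neg
      convert h2 using 1
      case e'_12 => ext t; simp [sub_eq_add_neg]
      all_goals rfl
    have hφmono : Monotone (fun t : ℝ => 1 - c ^ (t : ℝ)) := by
      intro s t hst
      simp only
      have : c ^ (t:ℝ) ≤ c ^ (s:ℝ) := Real.rpow_le_rpow_of_exponent_ge hc hc1 hst
      linarith
    -- inner composition
    have hinner : ConcaveOn ℝ (Set.Ici 0)
        (fun u : ℝ => 1 - c ^ (2 * u / τ ^ 2 + Real.sqrt u / τ + 2 : ℝ)) :=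
      concave_comp_mono (g := fun t : ℝ => 1 - c ^ (t : ℝ))
        (f := fun u : ℝ => 2 * u / τ ^ 2 + Real.sqrt u / τ + 2)
        hφ hφmono hg (fun x _ => Set.mem_univ _)
    have hinner_nn : ∀ u ∈ Set.Ici (0:ℝ),
        (1 - c ^ (2 * u / τ ^ 2 + Real.sqrt u / τ + 2 : ℝ)) ∈ Set.Ici (0:ℝ) := by
      intro u hu
      have : c ^ (2 * u / τ ^ 2 + Real.sqrt u / τ + 2 : ℝ) ≤ 1 :=
        Real.rpow_le_one hc.le hc1 (hgnn u hu)
      simpa using this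
    -- outer: 2√
    have houter : ConcaveOn ℝ (Set.Ici 0) (fun x : ℝ => 2 * Real.sqrt x) := by
      have h := hsqrt.smul (c := 2) (by norm_num)
      simpa [smul_eq_mul] using h
    have houter_mono : Monotone (fun x : ℝ => 2 * Real.sqrt x) := by
      intro a b hab
      have := Real.sqrt_le_sqrt hab
      simp only
      linarith
    exact concave_comp_mono (g := fun x : ℝ => 2 * Real.sqrt x)
      (f := fun u : ℝ => 1 - c ^ (2 * u / τ ^ 2 + Real.sqrt u / τ + 2 : ℝ))
      houter houter_mono hinner hinner_nn
  · intro u hu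
    set E : ℝ := 2 * u / τ ^ 2 + Real.sqrt u / τ + 2 with hE
    have hcont : ContinuousAt
        (fun ε₀ : ℝ => 2 * Real.sqrt (1 - ((2 - ε₀) / 2) ^ (E : ℝ))) 0 := by
      have hbase : ContinuousAt (fun ε₀ : ℝ => (2 - ε₀) / 2) 0 := by fun_prop
      have h1 : ContinuousAt (fun ε₀ : ℝ => ((2 - ε₀) / 2) ^ (E : ℝ)) 0 :=
        hbase.rpow_const (Or.inl (by norm_num))
      have h2 : ContinuousAt
          (fun ε₀ : ℝ => 1 - ((2 - ε₀) / 2) ^ (E : ℝ)) 0 :=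
        continuousAt_const.sub h1
      exact continuousAt_const.mul (Real.continuous_sqrt.continuousAt.comp h2)
    have hval : 2 * Real.sqrt (1 - ((2 - (0:ℝ)) / 2) ^ (E : ℝ)) = 0 := by
      norm_num
    have h := hcont.tendsto
    rw [hval] at h
    exact tendsto_nhdsWithin_of_tendsto_nhds h
end

section
/- For any real λ with 0 ≤ λ < 1 and odd natural number M, √(1−λ²) · ∑_{p=0}^{(M−1)/2} λ^{2p} · (2p)! / (4^p · (p!)²) ≥ 1 − λ²/(M(1−λ²)). -/
noncomputable def sqA (p : ℕ) : ℝ :=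
  (Nat.factorial (2 * p) : ℝ) / (4 ^ p * (Nat.factorial p : ℝ) ^ 2)

lemma sqA_pos (p : ℕ) : 0 < sqA p := by
  unfold sqA
  positivity

lemma sqA_zero : sqA 0 = 1 := by simp [sqA]

lemma sqA_succ (p : ℕ) : (2 * (p : ℝ) + 2) * sqA (p + 1) = (2 * p + 1) * sqA p := by
  unfold sqA
  have h1 : 2 * (p + 1) = (2 * p + 1) + 1 := by ring
  rw [h1, Nat.factorial_succ, Nat.factorial_succ, Nat.factorial_succ]
  have h4 : (4 : ℝ) ^ (p + 1) = 4 * 4 ^ p := by ring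
  push_cast
  have hf : ((Nat.factorial p : ℝ)) ≠ 0 := Nat.cast_ne_zero.mpr (Nat.factorial_ne_zero p)
  have h4p : (4 : ℝ) ^ p ≠ 0 := by positivity
  field_simp
  ring

lemma sqA_le_one (p : ℕ) : sqA p ≤ 1 := by
  induction p with
  | zero => rw [sqA_zero]
  | succ n ih =>
    have h := sqA_succ n
    have hpos : (0:ℝ) < 2 * (n:ℝ) + 2 := by positivity
    have : sqA (n+1) = (2 * n + 1) / (2 * n + 2) * sqA n := by
      field_simp
      linarith [h]
    rw [this]
    have h1 : (2 * (n:ℝ) + 1) / (2 * n + 2) ≤ 1 := by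
      rw [div_le_one hpos]; linarith
    calc (2 * (n:ℝ) + 1) / (2 * n + 2) * sqA n ≤ 1 * sqA n := by
          apply mul_le_mul_of_nonneg_right h1 (sqA_pos n).le
      _ ≤ 1 := by simpa using ih


-- reflection: 2 ∑ k t_k = n ∑ t_k
lemma sqA_reflect (n : ℕ) :
    2 * ∑ k ∈ Finset.range (n + 1), (k : ℝ) * (sqA k * sqA (n - k)) =
      n * ∑ k ∈ Finset.range (n + 1), sqA k * sqA (n - k) := by
  have hre := Finset.sum_range_reflect (fun k => (k : ℝ) * (sqA k * sqA (n - k))) (n + 1)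
  have hre' : ∑ k ∈ Finset.range (n + 1), ((n : ℝ) - k) * (sqA (n - k) * sqA k) =
      ∑ k ∈ Finset.range (n + 1), (k : ℝ) * (sqA k * sqA (n - k)) := by
    rw [← hre]
    apply Finset.sum_congr rfl
    intro k hk
    have hk' : k ≤ n := Nat.lt_succ_iff.mp (Finset.mem_range.mp hk)
    have h1 : n + 1 - 1 - k = n - k := by omega
    have h2 : n - (n - k) = k := by omega
    rw [h1, h2, Nat.cast_sub hk']
  calc 2 * ∑ k ∈ Finset.range (n + 1), (k : ℝ) * (sqA k * sqA (n - k))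
      = (∑ k ∈ Finset.range (n + 1), (k : ℝ) * (sqA k * sqA (n - k))) +
        ∑ k ∈ Finset.range (n + 1), ((n : ℝ) - k) * (sqA (n - k) * sqA k) := by
        rw [hre']; ring
    _ = ∑ k ∈ Finset.range (n + 1), ((k : ℝ) * (sqA k * sqA (n - k)) +
          ((n : ℝ) - k) * (sqA (n - k) * sqA k)) := by rw [Finset.sum_add_distrib]
    _ = ∑ k ∈ Finset.range (n + 1), (n : ℝ) * (sqA k * sqA (n - k)) := by
        apply Finset.sum_congr rfl; intro k _; ring
    _ = n * ∑ k ∈ Finset.range (n + 1), sqA k * sqA (n - k) := by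
        rw [Finset.mul_sum]

lemma sqA_conv (n : ℕ) : ∑ k ∈ Finset.range (n + 1), sqA k * sqA (n - k) = 1 := by
  induction n with
  | zero => simp [sqA_zero]
  | succ n ih =>
    have hpos : (0 : ℝ) < (n : ℝ) + 1 := by positivity
    have key : ((n : ℝ) + 1) * ∑ k ∈ Finset.range (n + 2), sqA k * sqA (n + 1 - k) =
        ((n : ℝ) + 1) * 1 := by
      have h1 := sqA_reflect (n + 1)
      push_cast at h1
      -- 2 ∑_{range(n+2)} k t_k = (n+1) u_{n+1}
      have hshift : ∑ k ∈ Finset.range (n + 2), 2 * (k : ℝ) * (sqA k * sqA (n + 1 - k)) =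
          ∑ k ∈ Finset.range (n + 1), (2 * (k : ℝ) + 1) * (sqA k * sqA (n - k)) := by
        rw [Finset.sum_range_succ' (fun k => 2 * (k : ℝ) * (sqA k * sqA (n + 1 - k))) (n + 1)]
        simp only [Nat.cast_zero, mul_zero, zero_mul, add_zero]
        apply Finset.sum_congr rfl
        intro k hk
        have h2 : n + 1 - (k + 1) = n - k := by omega
        have hs := sqA_succ k
        push_cast
        nlinarith [sqA_pos (n - k), hs]
      have hsum2 : ∑ k ∈ Finset.range (n + 1), (2 * (k : ℝ) + 1) * (sqA k * sqA (n - k)) =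
          2 * (∑ k ∈ Finset.range (n + 1), (k : ℝ) * (sqA k * sqA (n - k))) +
            ∑ k ∈ Finset.range (n + 1), sqA k * sqA (n - k) := by
        rw [Finset.mul_sum, ← Finset.sum_add_distrib]
        apply Finset.sum_congr rfl; intro k _; ring
      have h3 := sqA_reflect n
      -- assemble
      have lhs_eq : ((n : ℝ) + 1) * ∑ k ∈ Finset.range (n + 2), sqA k * sqA (n + 1 - k) =
          ∑ k ∈ Finset.range (n + 2), 2 * (k : ℝ) * (sqA k * sqA (n + 1 - k)) := by
        rw [show ∑ k ∈ Finset.range (n + 2), 2 * (k : ℝ) * (sqA k * sqA (n + 1 - k)) =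
            2 * ∑ k ∈ Finset.range (n + 2), (k : ℝ) * (sqA k * sqA (n + 1 - k)) by
          rw [Finset.mul_sum]; apply Finset.sum_congr rfl; intro k _; ring]
        rw [h1]
      rw [lhs_eq, hshift, hsum2, h3, ih]
      ring
    have := mul_left_cancel₀ (ne_of_gt hpos) key
    simpa using this


lemma sqA_summable {x : ℝ} (hx0 : 0 ≤ x) (hx1 : x < 1) :
    Summable (fun p => sqA p * x ^ p) := by
  apply Summable.of_nonneg_of_le (fun p => mul_nonneg (sqA_pos p).le (pow_nonneg hx0 p))
    (fun p => mul_le_of_le_one_left (by positivity) (sqA_le_one p))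
  exact summable_geometric_of_lt_one hx0 hx1

lemma sqA_summable' {x : ℝ} (hx0 : 0 ≤ x) (hx1 : x < 1) :
    Summable (fun p : ℕ => (p : ℝ) * (sqA p * x ^ p)) := by
  apply Summable.of_nonneg_of_le (fun p => mul_nonneg (Nat.cast_nonneg p) (mul_nonneg (sqA_pos p).le (pow_nonneg hx0 p))) (fun p => ?_)
    ((summable_pow_mul_geometric_of_norm_lt_one 1 (by rwa [Real.norm_eq_abs, abs_of_nonneg hx0])))
  have h : sqA p * x ^ p ≤ x ^ p := mul_le_of_le_one_left (by positivity) (sqA_le_one p)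
  calc (p:ℝ) * (sqA p * x ^ p) ≤ (p:ℝ) * x ^ p :=
        mul_le_mul_of_nonneg_left h (by positivity)
    _ = (p:ℝ) ^ 1 * x ^ p := by ring

lemma sqA_norm_summable {x : ℝ} (hx0 : 0 ≤ x) (hx1 : x < 1) :
    Summable (fun p => ‖sqA p * x ^ p‖) := by
  have := sqA_summable hx0 hx1
  refine this.congr fun p => ?_
  rw [Real.norm_eq_abs, abs_of_nonneg (mul_nonneg (sqA_pos p).le (pow_nonneg hx0 p))]

lemma sqA_norm_summable' {x : ℝ} (hx0 : 0 ≤ x) (hx1 : x < 1) :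
    Summable (fun p : ℕ => ‖(p : ℝ) * (sqA p * x ^ p)‖) := by
  have := sqA_summable' hx0 hx1
  refine this.congr fun p => ?_
  rw [Real.norm_eq_abs, abs_of_nonneg (mul_nonneg (Nat.cast_nonneg p) (mul_nonneg (sqA_pos p).le (pow_nonneg hx0 p)))]

lemma sqA_tsum_sq {x : ℝ} (hx0 : 0 ≤ x) (hx1 : x < 1) :
    (∑' p, sqA p * x ^ p) * (∑' p, sqA p * x ^ p) = (1 - x)⁻¹ := by
  rw [tsum_mul_tsum_eq_tsum_sum_range_of_summable_norm (sqA_norm_summable hx0 hx1)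
    (sqA_norm_summable hx0 hx1)]
  rw [show (fun n => ∑ k ∈ Finset.range (n + 1),
        (sqA k * x ^ k) * (sqA (n - k) * x ^ (n - k))) = fun n => x ^ n from ?_]
  · exact tsum_geometric_of_lt_one hx0 hx1
  · funext n
    have : ∑ k ∈ Finset.range (n + 1), (sqA k * x ^ k) * (sqA (n - k) * x ^ (n - k)) =
        ∑ k ∈ Finset.range (n + 1), (sqA k * sqA (n - k)) * x ^ n := by
      apply Finset.sum_congr rfl
      intro k hk
      have hk' : k ≤ n := Nat.lt_succ_iff.mp (Finset.mem_range.mp hk)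
      rw [show sqA k * x ^ k * (sqA (n - k) * x ^ (n - k)) =
        sqA k * sqA (n - k) * (x ^ k * x ^ (n - k)) by ring, ← pow_add,
        Nat.add_sub_cancel' hk']
    rw [this, ← Finset.sum_mul, sqA_conv n, one_mul]

lemma sqA_tsum_prod {x : ℝ} (hx0 : 0 ≤ x) (hx1 : x < 1) :
    (∑' p : ℕ, (p : ℝ) * (sqA p * x ^ p)) * (∑' p, sqA p * x ^ p) = x / 2 * ((1 - x) ^ 2)⁻¹ := by
  rw [tsum_mul_tsum_eq_tsum_sum_range_of_summable_norm (sqA_norm_summable' hx0 hx1)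
    (sqA_norm_summable hx0 hx1)]
  have hterm : (fun n => ∑ k ∈ Finset.range (n + 1),
      ((k : ℝ) * (sqA k * x ^ k)) * (sqA (n - k) * x ^ (n - k))) =
      fun n : ℕ => (n : ℝ) / 2 * x ^ n := by
    funext n
    have h1 : ∑ k ∈ Finset.range (n + 1), ((k : ℝ) * (sqA k * x ^ k)) * (sqA (n - k) * x ^ (n - k)) =
        (∑ k ∈ Finset.range (n + 1), (k : ℝ) * (sqA k * sqA (n - k))) * x ^ n := by
      rw [Finset.sum_mul]
      apply Finset.sum_congr rfl
      intro k hk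
      have hk' : k ≤ n := Nat.lt_succ_iff.mp (Finset.mem_range.mp hk)
      rw [show ((k : ℝ) * (sqA k * x ^ k)) * (sqA (n - k) * x ^ (n - k)) =
        (k : ℝ) * (sqA k * sqA (n - k)) * (x ^ k * x ^ (n - k)) by ring,
        ← pow_add, Nat.add_sub_cancel' hk']
    have h2 : ∑ k ∈ Finset.range (n + 1), (k : ℝ) * (sqA k * sqA (n - k)) = (n : ℝ) / 2 := by
      have := sqA_reflect n
      rw [sqA_conv n] at this
      linarith
    rw [h1, h2]
  rw [hterm]
  have : ∑' n : ℕ, (n : ℝ) / 2 * x ^ n = (2 : ℝ)⁻¹ * ∑' n : ℕ, (n : ℝ) * x ^ n := by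
    rw [← tsum_mul_left]
    congr 1; funext n; ring
  rw [this, tsum_coe_mul_geometric_of_norm_lt_one (by rwa [Real.norm_eq_abs, abs_of_nonneg hx0])]
  field_simp


lemma sqA_def (p : ℕ) : sqA p = (Nat.factorial (2 * p) : ℝ) / (4 ^ p * (Nat.factorial p : ℝ) ^ 2) := rfl


set_option maxHeartbeats 1000000 in
/-- Lower bound on the probability that a one-mode squeezed vacuum with
parameter `λ` has at most `M−1` photons: for odd `M`,
`√(1−λ²) ∑_{p=0}^{(M−1)/2} λ^{2p} (2p)!/(4^p (p!)²) ≥ 1 − λ²/(M(1−λ²))`. -/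
theorem stmt10 (lam : ℝ) (hl0 : 0 ≤ lam) (hl1 : lam < 1) (M : ℕ) (hM : Odd M) :
    1 - lam ^ 2 / (M * (1 - lam ^ 2)) ≤
      Real.sqrt (1 - lam ^ 2) *
        ∑ p ∈ Finset.range ((M - 1) / 2 + 1),
          lam ^ (2 * p) * (Nat.factorial (2 * p) : ℝ) /
            (4 ^ p * (Nat.factorial p : ℝ) ^ 2) := by
  obtain ⟨m, hm⟩ := hM
  set x : ℝ := lam ^ 2 with hxdef
  have hx0 : 0 ≤ x := sq_nonneg lam
  have hx1 : x < 1 := by rw [hxdef]; exact pow_lt_one₀ hl0 hl1 two_ne_zero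
  have h1x : (0:ℝ) < 1 - x := by linarith
  set K := (M - 1) / 2 + 1 with hKdef
  have hK : K = m + 1 := by omega
  have hf := sqA_summable hx0 hx1
  have hg := sqA_summable' hx0 hx1
  set L := ∑' p, sqA p * x ^ p with hLdef
  set D := ∑' p : ℕ, (p : ℝ) * (sqA p * x ^ p) with hDdef
  have hL2 : L * L = (1 - x)⁻¹ := sqA_tsum_sq hx0 hx1
  have hL1 : 1 ≤ L := by
    have h0 : sqA 0 * x ^ 0 ≤ L :=
      Summable.le_tsum hf 0 (fun i _ => mul_nonneg (sqA_pos i).le (pow_nonneg hx0 i))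
    simpa [sqA_zero] using h0
  have hLpos : 0 < L := lt_of_lt_of_le one_pos hL1
  have hsqrt_pos : 0 < Real.sqrt (1 - x) := Real.sqrt_pos.mpr h1x
  have hss : Real.sqrt (1 - x) * Real.sqrt (1 - x) = 1 - x := Real.mul_self_sqrt h1x.le
  have hsq : Real.sqrt (1 - x) * L = 1 := by
    set y := Real.sqrt (1 - x) * L with hy
    have hy0 : 0 ≤ y := mul_nonneg (Real.sqrt_nonneg _) hLpos.le
    have hy2 : y * y = 1 := by
      have h : y * y = (Real.sqrt (1 - x) * Real.sqrt (1 - x)) * (L * L) := by rw [hy]; ring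
      rw [h, hss, hL2, mul_inv_cancel₀ (ne_of_gt h1x)]
    have hfac : (y - 1) * (y + 1) = 0 := by nlinarith
    rcases mul_eq_zero.mp hfac with h | h
    · linarith
    · linarith
  have hD : D * L = x / 2 * ((1 - x) ^ 2)⁻¹ := sqA_tsum_prod hx0 hx1
  have hsD : Real.sqrt (1 - x) * D = x / (2 * (1 - x)) := by
    have hsne : Real.sqrt (1 - x) ≠ 0 := ne_of_gt hsqrt_pos
    have h1xne : (1 - x) ≠ 0 := ne_of_gt h1x
    have hLval : L = (Real.sqrt (1 - x))⁻¹ :=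
      eq_inv_of_mul_eq_one_left (mul_comm (Real.sqrt (1 - x)) L ▸ hsq)
    rw [hLval] at hD
    have hDval : D = x / 2 * ((1 - x) ^ 2)⁻¹ * Real.sqrt (1 - x) := by
      have h0 : D = D * (Real.sqrt (1 - x))⁻¹ * Real.sqrt (1 - x) := by field_simp
      rw [hD] at h0; exact h0
    rw [hDval, show Real.sqrt (1 - x) * (x / 2 * ((1 - x) ^ 2)⁻¹ * Real.sqrt (1 - x))
      = x / 2 * ((1 - x) ^ 2)⁻¹ * (Real.sqrt (1 - x) * Real.sqrt (1 - x)) from by ring, hss]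
    field_simp
  -- tail
  set T := ∑' i, sqA (i + K) * x ^ (i + K) with hTdef
  have hdecomp : (∑ i ∈ Finset.range K, sqA i * x ^ i) + T = L := Summable.sum_add_tsum_nat_add K hf
  have hfs : Summable (fun i => sqA (i + K) * x ^ (i + K)) := (summable_nat_add_iff K).2 hf
  have hgs : Summable (fun i : ℕ => ((i + K : ℕ) : ℝ) * (sqA (i + K) * x ^ (i + K))) :=
    (summable_nat_add_iff K).2 hg
  have hT0 : 0 ≤ T :=
    tsum_nonneg fun i => mul_nonneg (sqA_pos _).le (pow_nonneg hx0 _)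
  have hKT : (K : ℝ) * T ≤ D := by
    have h1 : (K : ℝ) * T = ∑' i, (K : ℝ) * (sqA (i + K) * x ^ (i + K)) := by
      rw [hTdef, tsum_mul_left]
    have h2 : ∑' i, (K : ℝ) * (sqA (i + K) * x ^ (i + K)) ≤
        ∑' i : ℕ, ((i + K : ℕ) : ℝ) * (sqA (i + K) * x ^ (i + K)) := by
      apply Summable.tsum_le_tsum _ (hfs.mul_left _) hgs
      intro i
      apply mul_le_mul_of_nonneg_right _ (mul_nonneg (sqA_pos _).le (pow_nonneg hx0 _))
      exact_mod_cast Nat.le_add_left K i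
    have h3 : ∑' i : ℕ, ((i + K : ℕ) : ℝ) * (sqA (i + K) * x ^ (i + K)) ≤ D := by
      have heq : (∑ i ∈ Finset.range K, (i : ℝ) * (sqA i * x ^ i)) +
          ∑' i : ℕ, ((i + K : ℕ) : ℝ) * (sqA (i + K) * x ^ (i + K)) = D :=
        Summable.sum_add_tsum_nat_add K hg
      have hpart : 0 ≤ ∑ i ∈ Finset.range K, (i : ℝ) * (sqA i * x ^ i) :=
        Finset.sum_nonneg fun i _ =>
          mul_nonneg (Nat.cast_nonneg i) (mul_nonneg (sqA_pos i).le (pow_nonneg hx0 i))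
      linarith
    linarith
  have hMpos : (0:ℝ) < (M : ℝ) := by
    have : 0 < M := by omega
    exact_mod_cast this
  have hM2K : (M : ℝ) ≤ 2 * (K : ℝ) := by
    rw [hK]
    have : (M : ℝ) = 2 * m + 1 := by rw [hm]; push_cast; ring
    rw [this]; push_cast; linarith
  have hsT0 : 0 ≤ Real.sqrt (1 - x) * T := mul_nonneg hsqrt_pos.le hT0
  have hstep : Real.sqrt (1 - x) * T ≤ x / ((M : ℝ) * (1 - x)) := by
    have hden : (0:ℝ) < (M : ℝ) * (1 - x) := mul_pos hMpos h1x
    rw [le_div_iff₀ hden]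
    have h1 : (K : ℝ) * (Real.sqrt (1 - x) * T) ≤ x / (2 * (1 - x)) :=
      calc (K : ℝ) * (Real.sqrt (1 - x) * T) = Real.sqrt (1 - x) * ((K : ℝ) * T) := by ring
        _ ≤ Real.sqrt (1 - x) * D := mul_le_mul_of_nonneg_left hKT hsqrt_pos.le
        _ = x / (2 * (1 - x)) := hsD
    calc Real.sqrt (1 - x) * T * ((M : ℝ) * (1 - x))
        ≤ Real.sqrt (1 - x) * T * (2 * (K : ℝ) * (1 - x)) := by
          apply mul_le_mul_of_nonneg_left _ hsT0
          exact mul_le_mul_of_nonneg_right hM2K h1x.le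
      _ = (2 * (1 - x)) * ((K : ℝ) * (Real.sqrt (1 - x) * T)) := by ring
      _ ≤ (2 * (1 - x)) * (x / (2 * (1 - x))) :=
          mul_le_mul_of_nonneg_left h1 (by linarith)
      _ = x := by field_simp
  have hsum_eq : ∑ p ∈ Finset.range K,
      lam ^ (2 * p) * (Nat.factorial (2 * p) : ℝ) / (4 ^ p * (Nat.factorial p : ℝ) ^ 2) =
      ∑ p ∈ Finset.range K, sqA p * x ^ p := by
    apply Finset.sum_congr rfl
    intro p _
    rw [sqA_def, pow_mul, ← hxdef]
    ring
  rw [hsum_eq]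
  have hPeq : ∑ p ∈ Finset.range K, sqA p * x ^ p = L - T := by linarith
  rw [hPeq]
  have hexp : Real.sqrt (1 - x) * (L - T) = 1 - Real.sqrt (1 - x) * T := by
    rw [mul_sub, hsq]
  rw [hexp]
  linarith
end

section
/- Let q > 0 and set N(q) = e^{−1/(1+q)}·(1 + 1/q) − 1. Then N(q) > 0 for all q > 0, N(q) → ∞ as q → 0⁺, and N(q) → 0 as q → ∞. -/
open Filter

/-- The negativity `N(q) = e^{−1/(1+q)}(1+1/q) − 1` of a single-photon-added
thermal state is positive for all `q > 0`, diverges as `q → 0⁺`, and tends to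
`0` as `q → ∞`. -/
theorem stmt16 :
    (∀ q : ℝ, 0 < q → 0 < Real.exp (-1 / (1 + q)) * (1 + 1 / q) - 1) ∧
    Tendsto (fun q : ℝ => Real.exp (-1 / (1 + q)) * (1 + 1 / q) - 1)
      (nhdsWithin 0 (Set.Ioi 0)) atTop ∧
    Tendsto (fun q : ℝ => Real.exp (-1 / (1 + q)) * (1 + 1 / q) - 1)
      atTop (nhds 0) := by
  refine ⟨?_, ?_, ?_⟩
  · intro q hq
    have hq1 : (0:ℝ) < 1 + q := by linarith
    have hx : (-1 / (1 + q) : ℝ) ≠ 0 := by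
      have h1 : (1:ℝ) / (1 + q) ≠ 0 := by positivity
      simpa [neg_div] using neg_ne_zero.mpr h1
    have h := Real.add_one_lt_exp hx
    have hkey : q / (1 + q) < Real.exp (-1 / (1 + q)) := by
      have heq : -1 / (1 + q) + 1 = q / (1 + q) := by field_simp; ring
      linarith [heq ▸ h]
    have h1q : (1:ℝ) + 1 / q = (1 + q) / q := by field_simp; ring
    have hpos : (0:ℝ) < (1 + q) / q := by positivity
    have hmul : q / (1 + q) * ((1 + q) / q) = 1 := by field_simp
    rw [h1q]
    nlinarith [mul_pos (sub_pos.mpr hkey) hpos]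
  · have h1 : Tendsto (fun q : ℝ => Real.exp (-1 / (1 + q)))
        (nhdsWithin 0 (Set.Ioi 0)) (nhds (Real.exp (-1))) := by
      apply Tendsto.mono_left ?_ nhdsWithin_le_nhds
      have hc : ContinuousAt (fun q : ℝ => Real.exp (-1 / (1 + q))) 0 := by
        apply Real.continuous_exp.continuousAt.comp
        apply ContinuousAt.div continuousAt_const (by fun_prop)
        norm_num
      simpa using hc.tendsto
    have h2 : Tendsto (fun q : ℝ => 1 + 1 / q) (nhdsWithin 0 (Set.Ioi 0)) atTop := by
      apply tendsto_atTop_add_const_left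
      exact tendsto_inv_nhdsGT_zero.congr fun x => (one_div x).symm
    have h3 := Tendsto.pos_mul_atTop (Real.exp_pos _) h1 h2
    exact tendsto_atTop_add_const_right _ _ h3
  · have hA : Tendsto (fun q : ℝ => 1 + q) atTop atTop :=
      tendsto_atTop_add_const_left _ _ tendsto_id
    have h0 : Tendsto (fun q : ℝ => 1 / q) atTop (nhds 0) := by
      simpa [one_div] using tendsto_inv_atTop_zero
    have hexp : Tendsto (fun q : ℝ => Real.exp (-1 / (1 + q))) atTop (nhds 1) := by
      have harg : Tendsto (fun q : ℝ => -1 / (1 + q)) atTop (nhds 0) := by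
        have := (tendsto_inv_atTop_zero.comp hA).neg
        simpa [neg_div, div_eq_mul_inv, Function.comp] using this
      simpa [Function.comp_def] using (Real.continuous_exp.continuousAt.tendsto.comp harg)
    have hmul : Tendsto (fun q : ℝ => Real.exp (-1 / (1 + q)) * (1 + 1 / q))
        atTop (nhds 1) := by
      have := hexp.mul ((tendsto_const_nhds.add h0) : Tendsto (fun q : ℝ => 1 + 1 / q) atTop (nhds (1 + 0)))
      simpa using this
    simpa using hmul.sub_const 1
end

section
/- For q > 0 and 0 ≤ s < 1, the convolution identity holds: (1/(sπ))·e^{−|α|²/s} convolved (over ℂ ≅ ℝ²) with P(α) = ((1+q)/(πq³))·(|α|² − q/(1+q))·e^{−|α|²/q} equals ((1+q)/(π(q+s)³))·(|α|² − (q+s)(1−s)/(1+q))·e^{−|α|²/(q+s)}. -/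
open MeasureTheory Real

lemma my_ib2 {k : ℝ} (hk : 0 < k) :
    Integrable (fun x : ℝ => x ^ 2 * Real.exp (-k * x ^ 2)) := by
  have := integrable_rpow_mul_exp_neg_mul_sq hk (by norm_num : (-1:ℝ) < 2)
  simpa [Real.rpow_two] using this

lemma my_int_g0 {k : ℝ} (hk : 0 < k) (μ : ℝ) :
    Integrable (fun x : ℝ => Real.exp (-k * (x - μ) ^ 2)) :=
  (integrable_exp_neg_mul_sq hk).comp_sub_right μ

lemma my_int_g1 {k : ℝ} (hk : 0 < k) (μ : ℝ) :
    Integrable (fun x : ℝ => x * Real.exp (-k * (x - μ) ^ 2)) := by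
  have h : (fun x : ℝ => x * Real.exp (-k * (x - μ) ^ 2))
      = fun x => ((x - μ) * Real.exp (-k * (x - μ) ^ 2) + μ * Real.exp (-k * (x - μ) ^ 2)) := by
    funext x; ring
  rw [h]
  exact ((integrable_mul_exp_neg_mul_sq hk).comp_sub_right μ).add ((my_int_g0 hk μ).const_mul μ)

lemma my_int_g2 {k : ℝ} (hk : 0 < k) (μ : ℝ) :
    Integrable (fun x : ℝ => x ^ 2 * Real.exp (-k * (x - μ) ^ 2)) := by
  have h : (fun x : ℝ => x ^ 2 * Real.exp (-k * (x - μ) ^ 2))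
      = fun x => ((x - μ) ^ 2 * Real.exp (-k * (x - μ) ^ 2)
          + (2 * μ) * ((x - μ) * Real.exp (-k * (x - μ) ^ 2))
          + (μ ^ 2) * Real.exp (-k * (x - μ) ^ 2)) := by
    funext x; ring
  rw [h]
  exact (((my_ib2 hk).comp_sub_right μ).add
    (((integrable_mul_exp_neg_mul_sq hk).comp_sub_right μ).const_mul _)).add
    ((my_int_g0 hk μ).const_mul _)

lemma my_I0 {k : ℝ} (hk : 0 < k) (μ : ℝ) :
    ∫ x : ℝ, Real.exp (-k * (x - μ) ^ 2) = Real.sqrt (π / k) := by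
  rw [← integral_gaussian k]
  exact integral_sub_right_eq_self (fun x => Real.exp (-k * x ^ 2)) μ

lemma my_J1 {k : ℝ} (hk : 0 < k) :
    ∫ x : ℝ, x * Real.exp (-k * x ^ 2) = 0 := by
  apply integral_eq_zero_of_hasDerivAt_of_integrable
    (f := fun x : ℝ => -(1/(2*k)) * Real.exp (-k * x ^ 2))
  · intro x
    have h1 : HasDerivAt (fun x : ℝ => -k * x ^ 2) (-k * (2 * x)) x := by
      simpa using (hasDerivAt_pow 2 x).const_mul (-k)
    have h2 := (h1.exp).const_mul (-(1/(2*k)))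
    refine h2.congr_deriv ?_
    field_simp
  · exact integrable_mul_exp_neg_mul_sq hk
  · exact (integrable_exp_neg_mul_sq hk).const_mul _

lemma my_J2 {k : ℝ} (hk : 0 < k) :
    ∫ x : ℝ, x ^ 2 * Real.exp (-k * x ^ 2) = Real.sqrt (π / k) / (2 * k) := by
  have h0 : ∫ x : ℝ, (x ^ 2 * Real.exp (-k * x ^ 2)
      - (1/(2*k)) * Real.exp (-k * x ^ 2)) = 0 := by
    apply integral_eq_zero_of_hasDerivAt_of_integrable
      (f := fun x : ℝ => -(1/(2*k)) * (x * Real.exp (-k * x ^ 2)))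
    · intro x
      have h1 : HasDerivAt (fun x : ℝ => -k * x ^ 2) (-k * (2 * x)) x := by
        simpa using (hasDerivAt_pow 2 x).const_mul (-k)
      have h2 := ((hasDerivAt_id x).mul h1.exp).const_mul (-(1/(2*k)))
      refine h2.congr_deriv ?_
      field_simp
      simp only [id]
      ring
    · exact (my_ib2 hk).sub ((integrable_exp_neg_mul_sq hk).const_mul _)
    · exact (integrable_mul_exp_neg_mul_sq hk).const_mul _
  rw [integral_sub (my_ib2 hk) ((integrable_exp_neg_mul_sq hk).const_mul _),
    integral_const_mul, integral_gaussian] at h0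
  have hkne : k ≠ 0 := ne_of_gt hk
  rw [sub_eq_zero] at h0
  rw [h0]
  field_simp

lemma my_I1 {k : ℝ} (hk : 0 < k) (μ : ℝ) :
    ∫ x : ℝ, x * Real.exp (-k * (x - μ) ^ 2) = μ * Real.sqrt (π / k) := by
  have h := integral_add_right_eq_self (μ := volume) (fun x : ℝ => x * Real.exp (-k * (x - μ) ^ 2)) μ
  rw [← h]
  have e : ∀ x : ℝ, (x + μ) * Real.exp (-k * (x + μ - μ) ^ 2)
      = x * Real.exp (-k * x ^ 2) + μ * Real.exp (-k * x ^ 2) := by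
    intro x; rw [add_sub_cancel_right]; ring
  simp only [e]
  rw [integral_add (integrable_mul_exp_neg_mul_sq hk)
      ((integrable_exp_neg_mul_sq hk).const_mul _),
    my_J1 hk, integral_const_mul, integral_gaussian]
  ring

lemma my_I2 {k : ℝ} (hk : 0 < k) (μ : ℝ) :
    ∫ x : ℝ, x ^ 2 * Real.exp (-k * (x - μ) ^ 2)
      = (μ ^ 2 + 1 / (2 * k)) * Real.sqrt (π / k) := by
  have h := integral_add_right_eq_self (μ := volume) (fun x : ℝ => x ^ 2 * Real.exp (-k * (x - μ) ^ 2)) μ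
  rw [← h]
  have e : ∀ x : ℝ, (x + μ) ^ 2 * Real.exp (-k * (x + μ - μ) ^ 2)
      = x ^ 2 * Real.exp (-k * x ^ 2) + (2 * μ) * (x * Real.exp (-k * x ^ 2))
        + μ ^ 2 * Real.exp (-k * x ^ 2) := by
    intro x; rw [add_sub_cancel_right]; ring
  simp only [e]
  have hb : Integrable (fun x : ℝ => 2 * μ * (x * Real.exp (-k * x ^ 2))) volume :=
    (integrable_mul_exp_neg_mul_sq hk).const_mul _
  have hc : Integrable (fun x : ℝ => μ ^ 2 * Real.exp (-k * x ^ 2)) volume :=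
    (integrable_exp_neg_mul_sq hk).const_mul _
  have ha : Integrable (fun x : ℝ => x ^ 2 * Real.exp (-k * x ^ 2)
      + 2 * μ * (x * Real.exp (-k * x ^ 2))) volume := (my_ib2 hk).add hb
  rw [integral_add ha hc, integral_add (my_ib2 hk) hb,
    my_J2 hk, integral_const_mul, my_J1 hk, integral_const_mul, integral_gaussian]
  field_simp
  ring

lemma my_point (q s a b x y : ℝ) (hq : 0 < q) (hs : 0 < s) :
    (1 / (s * π)) * Real.exp (-((a - x) ^ 2 + (b - y) ^ 2) / s) *
      ((1 + q) / (π * q ^ 3) * ((x ^ 2 + y ^ 2) - q / (1 + q)) *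
        Real.exp (-(x ^ 2 + y ^ 2) / q)) =
    ((1 / (s * π)) * ((1 + q) / (π * q ^ 3)) * Real.exp (-(a ^ 2 + b ^ 2) / (q + s))) *
      (x ^ 2 * Real.exp (-((q+s)/(s*q)) * (x - a*q/(q+s)) ^ 2) *
         Real.exp (-((q+s)/(s*q)) * (y - b*q/(q+s)) ^ 2)
       + Real.exp (-((q+s)/(s*q)) * (x - a*q/(q+s)) ^ 2) *
         (y ^ 2 * Real.exp (-((q+s)/(s*q)) * (y - b*q/(q+s)) ^ 2))
       - q / (1 + q) * (Real.exp (-((q+s)/(s*q)) * (x - a*q/(q+s)) ^ 2) *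
         Real.exp (-((q+s)/(s*q)) * (y - b*q/(q+s)) ^ 2))) := by
  have hqs : (0:ℝ) < q + s := by linarith
  have hexp : Real.exp (-((a - x) ^ 2 + (b - y) ^ 2) / s) * Real.exp (-(x ^ 2 + y ^ 2) / q)
      = Real.exp (-(a ^ 2 + b ^ 2) / (q + s)) *
        (Real.exp (-((q+s)/(s*q)) * (x - a*q/(q+s)) ^ 2) *
         Real.exp (-((q+s)/(s*q)) * (y - b*q/(q+s)) ^ 2)) := by
    rw [← Real.exp_add, ← Real.exp_add, ← Real.exp_add]
    congr 1
    field_simp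
    ring
  calc (1 / (s * π)) * Real.exp (-((a - x) ^ 2 + (b - y) ^ 2) / s) *
      ((1 + q) / (π * q ^ 3) * ((x ^ 2 + y ^ 2) - q / (1 + q)) *
        Real.exp (-(x ^ 2 + y ^ 2) / q))
      = (1 / (s * π)) * ((1 + q) / (π * q ^ 3)) * ((x ^ 2 + y ^ 2) - q / (1 + q)) *
        (Real.exp (-((a - x) ^ 2 + (b - y) ^ 2) / s) * Real.exp (-(x ^ 2 + y ^ 2) / q)) := by
        ring
    _ = _ := by rw [hexp]; ring


/-- Gaussian additive noise acting on the P-representation of a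
single-photon-added thermal state: the two-dimensional convolution of the
Gaussian kernel `(1/(sπ)) e^{−|α|²/s}` with
`P(α) = ((1+q)/(πq³))(|α|² − q/(1+q)) e^{−|α|²/q}` equals
`((1+q)/(π(q+s)³))(|α|² − (q+s)(1−s)/(1+q)) e^{−|α|²/(q+s)}`. -/
theorem stmt17 (q s : ℝ) (hq : 0 < q) (hs0 : 0 < s) (hs1 : s < 1) (α : ℂ) :
    (∫ β : ℂ,
        (1 / (s * π)) * Real.exp (-(‖α - β‖) ^ 2 / s) *
          (((1 + q) / (π * q ^ 3)) * ((‖β‖) ^ 2 - q / (1 + q)) *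
            Real.exp (-(‖β‖) ^ 2 / q))) =
      ((1 + q) / (π * (q + s) ^ 3)) *
        ((‖α‖) ^ 2 - (q + s) * (1 - s) / (1 + q)) *
        Real.exp (-(‖α‖) ^ 2 / (q + s)) := by
  have hπ : (0:ℝ) < π := Real.pi_pos
  have hqs : (0:ℝ) < q + s := by linarith
  have hk : (0:ℝ) < (q + s) / (s * q) := div_pos hqs (mul_pos hs0 hq)
  set u : ℝ → ℝ := fun x => Real.exp (-((q+s)/(s*q)) * (x - α.re*q/(q+s)) ^ 2) with hu
  set v : ℝ → ℝ := fun y => Real.exp (-((q+s)/(s*q)) * (y - α.im*q/(q+s)) ^ 2) with hv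
  have e1 := MeasurePreserving.integral_comp
      (Complex.volume_preserving_equiv_real_prod.symm _)
      Complex.measurableEquivRealProd.symm.measurableEmbedding
      (fun β : ℂ => (1 / (s * π)) * Real.exp (-(‖α - β‖) ^ 2 / s) *
          (((1 + q) / (π * q ^ 3)) * ((‖β‖) ^ 2 - q / (1 + q)) *
            Real.exp (-(‖β‖) ^ 2 / q)))
  rw [← e1]
  have key : ∀ p : ℝ × ℝ,
      (1 / (s * π)) * Real.exp (-(‖α - Complex.measurableEquivRealProd.symm p‖) ^ 2 / s) *
        (((1 + q) / (π * q ^ 3)) *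
          ((‖Complex.measurableEquivRealProd.symm p‖) ^ 2 - q / (1 + q)) *
          Real.exp (-(‖Complex.measurableEquivRealProd.symm p‖) ^ 2 / q))
      = ((1 / (s * π)) * ((1 + q) / (π * q ^ 3)) *
          Real.exp (-(α.re ^ 2 + α.im ^ 2) / (q + s))) *
        (p.1 ^ 2 * u p.1 * v p.2 + u p.1 * (p.2 ^ 2 * v p.2)
          - q / (1 + q) * (u p.1 * v p.2)) := by
    intro p
    have habs1 : (‖α - Complex.measurableEquivRealProd.symm p‖) ^ 2
        = (α.re - p.1) ^ 2 + (α.im - p.2) ^ 2 := by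
      rw [Complex.sq_norm, Complex.normSq_apply]
      simp
      ring
    have habs2 : (‖Complex.measurableEquivRealProd.symm p‖) ^ 2
        = p.1 ^ 2 + p.2 ^ 2 := by
      rw [Complex.sq_norm, Complex.normSq_apply]
      simp
      ring
    rw [habs1, habs2, hu, hv]
    exact my_point q s α.re α.im p.1 p.2 hq hs0
  simp only [key]
  rw [integral_const_mul, Measure.volume_eq_prod]
  have hA : Integrable (fun p : ℝ × ℝ => p.1 ^ 2 * u p.1 * v p.2)
      (volume.prod volume) :=
    (my_int_g2 hk (α.re*q/(q+s))).mul_prod (my_int_g0 hk (α.im*q/(q+s)))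
  have hB : Integrable (fun p : ℝ × ℝ => u p.1 * (p.2 ^ 2 * v p.2))
      (volume.prod volume) :=
    (my_int_g0 hk (α.re*q/(q+s))).mul_prod (my_int_g2 hk (α.im*q/(q+s)))
  have hC : Integrable (fun p : ℝ × ℝ => q / (1 + q) * (u p.1 * v p.2))
      (volume.prod volume) :=
    (((my_int_g0 hk (α.re*q/(q+s))).mul_prod (my_int_g0 hk (α.im*q/(q+s))))).const_mul _
  have hAB : Integrable (fun p : ℝ × ℝ => p.1 ^ 2 * u p.1 * v p.2
      + u p.1 * (p.2 ^ 2 * v p.2)) (volume.prod volume) := hA.add hB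
  rw [integral_sub hAB hC, integral_add hA hB]
  have hIA : ∫ p : ℝ × ℝ, p.1 ^ 2 * u p.1 * v p.2 ∂(volume.prod volume)
      = (∫ x : ℝ, x ^ 2 * u x) * (∫ y : ℝ, v y) :=
    integral_prod_mul (fun x => x ^ 2 * u x) v
  have hIB : ∫ p : ℝ × ℝ, u p.1 * (p.2 ^ 2 * v p.2) ∂(volume.prod volume)
      = (∫ x : ℝ, u x) * (∫ y : ℝ, y ^ 2 * v y) :=
    integral_prod_mul u (fun y => y ^ 2 * v y)
  have hIC : ∫ p : ℝ × ℝ, q / (1 + q) * (u p.1 * v p.2) ∂(volume.prod volume)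
      = q / (1 + q) * ((∫ x : ℝ, u x) * (∫ y : ℝ, v y)) := by
    rw [integral_const_mul]
    rw [integral_prod_mul u v]
  rw [hIA, hIB, hIC, hu, hv]
  rw [my_I2 hk (α.re*q/(q+s)), my_I2 hk (α.im*q/(q+s)), my_I0 hk (α.re*q/(q+s)),
    my_I0 hk (α.im*q/(q+s))]
  have habsα : (‖α‖) ^ 2 = α.re ^ 2 + α.im ^ 2 := by
    rw [Complex.sq_norm, Complex.normSq_apply]; ring
  rw [habsα]
  have hss : Real.sqrt (π / ((q + s) / (s * q))) * Real.sqrt (π / ((q + s) / (s * q)))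
      = π / ((q + s) / (s * q)) := Real.mul_self_sqrt (le_of_lt (div_pos hπ hk))
  set S := Real.sqrt (π / ((q + s) / (s * q))) with hS
  set E := Real.exp (-(α.re ^ 2 + α.im ^ 2) / (q + s)) with hE
  have expand : (1 / (s * π)) * ((1 + q) / (π * q ^ 3)) * E *
      (((α.re*q/(q+s)) ^ 2 + 1 / (2 * ((q+s)/(s*q)))) * S * S
        + S * (((α.im*q/(q+s)) ^ 2 + 1 / (2 * ((q+s)/(s*q)))) * S)
        - q / (1 + q) * (S * S))
      = (1 / (s * π)) * ((1 + q) / (π * q ^ 3)) * E *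
        (((α.re*q/(q+s)) ^ 2 + 1 / (2 * ((q+s)/(s*q))))
          + ((α.im*q/(q+s)) ^ 2 + 1 / (2 * ((q+s)/(s*q)))) - q / (1 + q)) * (S * S) := by
    ring
  rw [expand, hss]
  have h1q : (0:ℝ) < 1 + q := by linarith
  field_simp
  ring
end

section
/- For the function g(r) = ((1+q)/(πq³))·(r² − q/(1+q))·e^{−r²/q} on r ≥ 0 (q > 0), the integrals evaluate to: ∫₀^∞ ∫₀^{2π} |g(r)| r dφ dr = 2e^{−1/(1+q)}(1+q)/q − 1 and ∫₀^∞ ∫₀^{2π} g(r) r dφ dr = 1. -/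
open MeasureTheory Real Set Filter

/-- For the radial P-representation
`g(r) = ((1+q)/(πq³))(r² − q/(1+q)) e^{−r²/q}` of a single-photon-added thermal
state, the total absolute mass is `2e^{−1/(1+q)}(1+q)/q − 1` and the total mass
is `1` (the `φ` integration contributing a factor `2π`). -/
theorem stmt18 (q : ℝ) (hq : 0 < q) :
    (∫ r in Set.Ioi (0 : ℝ),
        (∫ _φ in (0 : ℝ)..(2 * π),
          |((1 + q) / (π * q ^ 3)) * (r ^ 2 - q / (1 + q)) *
              Real.exp (-r ^ 2 / q)| * r) =
      2 * Real.exp (-1 / (1 + q)) * (1 + q) / q - 1) ∧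
    (∫ r in Set.Ioi (0 : ℝ),
        (∫ _φ in (0 : ℝ)..(2 * π),
          ((1 + q) / (π * q ^ 3)) * (r ^ 2 - q / (1 + q)) *
              Real.exp (-r ^ 2 / q) * r) =
      1) := by
  have hq1 : (0:ℝ) < 1 + q := by linarith
  set a : ℝ := q / (1 + q) with ha_def
  have ha : 0 < a := div_pos hq hq1
  have haq : a < q := by
    rw [ha_def, div_lt_iff₀ hq1]; nlinarith
  set R : ℝ := Real.sqrt a with hR_def
  have hRpos : 0 < R := Real.sqrt_pos.mpr ha
  have hR2 : R ^ 2 = a := Real.sq_sqrt ha.le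
  set f : ℝ → ℝ := fun x => (x ^ 2 - a) * Real.exp (-x ^ 2 / q) * x with hf_def
  set F : ℝ → ℝ := fun x => -(q/2) * ((x ^ 2 - a + q) * Real.exp (-x ^ 2 / q)) with hF_def
  have hderiv : ∀ x : ℝ, HasDerivAt F (f x) x := by
    intro x
    have h1 : HasDerivAt (fun x : ℝ => x ^ 2) (2 * x) x := by
      simpa using (hasDerivAt_pow 2 x)
    have h2 : HasDerivAt (fun x : ℝ => Real.exp (-x ^ 2 / q))
        (Real.exp (-x ^ 2 / q) * (-(2 * x) / q)) x := ((h1.neg).div_const q).exp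
    have h3 : HasDerivAt (fun x : ℝ => x ^ 2 - a + q) (2 * x) x := by
      simpa using (h1.sub_const a).add_const q
    have h4 := (h3.mul h2).const_mul (-(q/2))
    refine HasDerivAt.congr_deriv h4 ?_
    simp only [hf_def]
    have hqq : q * q⁻¹ = 1 := mul_inv_cancel₀ hq.ne'
    linear_combination ((x ^ 2 - a + q) * x * Real.exp (-x ^ 2 / q)) * hqq
  have hcontf : Continuous f := by fun_prop
  have hcontF : Continuous F := by fun_prop
  have hFtop : Tendsto F atTop (nhds 0) := by
    have hsq : Tendsto (fun x : ℝ => x ^ 2 / q) atTop atTop :=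
      (tendsto_pow_atTop (by norm_num)).atTop_div_const hq
    have h1 : Tendsto (fun t : ℝ => t * Real.exp (-t)) atTop (nhds 0) := by
      simpa using tendsto_pow_mul_exp_neg_atTop_nhds_zero 1
    have h2 : Tendsto (fun t : ℝ => Real.exp (-t)) atTop (nhds 0) := by
      simpa using tendsto_pow_mul_exp_neg_atTop_nhds_zero 0
    have hG : Tendsto (fun t : ℝ => -(q/2) * ((q * t - a + q) * Real.exp (-t)))
        atTop (nhds 0) := by
      have h5 := (((h1.const_mul q).add ((h2.const_mul (q - a)))).const_mul (-(q/2)))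
      simp only [mul_zero, add_zero, zero_add] at h5
      convert h5 using 2 with t
      ring
    have heq : F = (fun t : ℝ => -(q/2) * ((q * t - a + q) * Real.exp (-t))) ∘
        (fun x : ℝ => x ^ 2 / q) := by
      funext x
      simp only [Function.comp, hF_def]
      have hx : q * (x ^ 2 / q) = x ^ 2 := by field_simp
      rw [hx, neg_div]
    rw [heq]
    exact hG.comp hsq
  -- sign facts
  have hf_nonneg : ∀ x ∈ Ici R, 0 ≤ f x := by
    intro x hx
    have hx0 : 0 ≤ x := le_trans hRpos.le hx
    have h1 : a ≤ x ^ 2 := hR2 ▸ pow_le_pow_left₀ hRpos.le hx 2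
    exact mul_nonneg (mul_nonneg (by linarith) (Real.exp_pos _).le) hx0
  have hf_nonpos : ∀ x ∈ Ioc (0:ℝ) R, f x ≤ 0 := by
    intro x hx
    have h1 : x ^ 2 ≤ a := hR2 ▸ pow_le_pow_left₀ hx.1.le hx.2 2
    exact mul_nonpos_of_nonpos_of_nonneg
      (mul_nonpos_of_nonpos_of_nonneg (by linarith) (Real.exp_pos _).le) hx.1.le
  -- integrals via FTC
  have hIoiR : ∫ x in Ioi R, f x = -F R := by
    have := integral_Ioi_of_hasDerivAt_of_nonneg hcontF.continuousWithinAt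
      (fun x hx => hderiv x) (fun x hx => hf_nonneg x (mem_Ici.mpr (le_of_lt hx))) hFtop
    simpa using this
  have hintIoiR : IntegrableOn f (Ioi R) :=
    integrableOn_Ioi_deriv_of_nonneg hcontF.continuousWithinAt
      (fun x hx => hderiv x) (fun x hx => hf_nonneg x (mem_Ici.mpr (le_of_lt hx))) hFtop
  have hintIoc : IntegrableOn f (Ioc 0 R) :=
    (hcontf.integrableOn_Icc (a := 0) (b := R)).mono_set Ioc_subset_Icc_self
  have hIocval : ∫ x in Ioc (0:ℝ) R, f x = F R - F 0 := by
    rw [← intervalIntegral.integral_of_le hRpos.le]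
    exact intervalIntegral.integral_eq_sub_of_hasDerivAt (fun x _ => hderiv x)
      (hcontf.intervalIntegrable 0 R)
  have hunion : Ioc (0:ℝ) R ∪ Ioi R = Ioi 0 := Ioc_union_Ioi_eq_Ioi hRpos.le
  have hdisj : Disjoint (Ioc (0:ℝ) R) (Ioi R) := Ioc_disjoint_Ioi le_rfl
  have hintf : IntegrableOn f (Ioi 0) := by
    rw [← hunion]; exact hintIoc.union hintIoiR
  have hsplit : ∀ h : ℝ → ℝ, IntegrableOn h (Ioc 0 R) → IntegrableOn h (Ioi R) →
      ∫ x in Ioi (0:ℝ), h x = (∫ x in Ioc (0:ℝ) R, h x) + ∫ x in Ioi R, h x := by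
    intro h h1 h2
    rw [← hunion, setIntegral_union hdisj measurableSet_Ioi h1 h2]
  have hf_total : ∫ x in Ioi (0:ℝ), f x = -F 0 := by
    rw [hsplit f hintIoc hintIoiR, hIocval, hIoiR]; ring
  have habs_total : ∫ x in Ioi (0:ℝ), |f x| = F 0 - 2 * F R := by
    rw [hsplit (fun x => |f x|) hintIoc.abs hintIoiR.abs]
    have e1 : ∫ x in Ioc (0:ℝ) R, |f x| = -(F R - F 0) := by
      rw [← hIocval, ← integral_neg]
      refine setIntegral_congr_fun measurableSet_Ioc (fun x hx => ?_)
      exact abs_of_nonpos (hf_nonpos x hx)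
    have e2 : ∫ x in Ioi R, |f x| = -F R := by
      rw [← hIoiR]
      refine setIntegral_congr_fun measurableSet_Ioi (fun x hx => ?_)
      exact abs_of_nonneg (hf_nonneg x (mem_Ici.mpr (le_of_lt hx)))
    rw [e1, e2]; ring
  -- values of F
  have hFR : F R = -(q / 2) * (q * Real.exp (-1 / (1 + q))) := by
    simp only [hF_def]
    rw [hR2]
    have : -a / q = -1 / (1 + q) := by
      rw [ha_def]; field_simp
    rw [this]
    ring
  have hF0 : F 0 = -(q / 2) * (q - a) := by
    simp only [hF_def]
    have h0 : -(0:ℝ) ^ 2 / q = 0 := by norm_num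
    rw [h0, Real.exp_zero]
    ring
  -- deal with the φ integral and constants
  have hc : (0:ℝ) < (1 + q) / (π * q ^ 3) := by positivity
  have hπ : (0:ℝ) < π := Real.pi_pos
  constructor
  · have key : ∀ r ∈ Ioi (0:ℝ),
        (∫ _φ in (0:ℝ)..(2 * π),
          |((1 + q) / (π * q ^ 3)) * (r ^ 2 - q / (1 + q)) * Real.exp (-r ^ 2 / q)| * r)
        = (2 * π * ((1 + q) / (π * q ^ 3))) * |f r| := by
      intro r hr
      have hr' : (0:ℝ) < r := hr
      rw [intervalIntegral.integral_const]
      simp only [smul_eq_mul, sub_zero, hf_def, ← ha_def]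
      have e1 : |(1 + q) / (π * q ^ 3) * (r ^ 2 - a) * Real.exp (-r ^ 2 / q)|
          = (1 + q) / (π * q ^ 3) * |r ^ 2 - a| * Real.exp (-r ^ 2 / q) := by
        rw [abs_mul, abs_mul, abs_of_pos hc, abs_of_pos (Real.exp_pos _)]
      have e2 : |(r ^ 2 - a) * Real.exp (-r ^ 2 / q) * r|
          = |r ^ 2 - a| * Real.exp (-r ^ 2 / q) * r := by
        rw [abs_mul, abs_mul, abs_of_pos (Real.exp_pos _), abs_of_pos hr']
      rw [e1, e2]
      ring
    rw [setIntegral_congr_fun measurableSet_Ioi key, integral_const_mul, habs_total, hFR, hF0]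
    have hq3 : q ^ 3 ≠ 0 := by positivity
    rw [ha_def]
    field_simp
    ring
  · have key : ∀ r ∈ Ioi (0:ℝ),
        (∫ _φ in (0:ℝ)..(2 * π),
          ((1 + q) / (π * q ^ 3)) * (r ^ 2 - q / (1 + q)) * Real.exp (-r ^ 2 / q) * r)
        = (2 * π * ((1 + q) / (π * q ^ 3))) * f r := by
      intro r hr
      rw [intervalIntegral.integral_const]
      simp only [smul_eq_mul, sub_zero, hf_def, ← ha_def]
      ring
    rw [setIntegral_congr_fun measurableSet_Ioi key, integral_const_mul, hf_total, hF0]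
    rw [ha_def]
    field_simp
    ring
end
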